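/- There exist two sets A, B ⊆ ℕ that are Turing incomparable: A is not computable from B and B is not computable from A. (Kleene–Post theorem.) -/

import Mathlib

/-- Partial functions `ℕ →. ℕ` computable relative to an oracle `O : ℕ → ℕ`. -/
inductive RecursiveInFn (O : ℕ → ℕ) : (ℕ →. ℕ) → Prop
  | oracle : RecursiveInFn O (fun n => Part.some (O n))
  | zero : RecursiveInFn O (pure 0)
  | succ : RecursiveInFn O Nat.succ
  | left : RecursiveInFn O ↑fun n : ℕ => n.unpair.1
  | right : RecursiveInFn O ↑fun n : ℕ => n.unpair.2
  | pair {f g} : RecursiveInFn O f → RecursiveInFn O g →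
      RecursiveInFn O fun n => Nat.pair <$> f n <*> g n
  | comp {f g} : RecursiveInFn O f → RecursiveInFn O g →
      RecursiveInFn O fun n => g n >>= f
  | prec {f g} : RecursiveInFn O f → RecursiveInFn O g →
      RecursiveInFn O (Nat.unpaired fun a n =>
        n.rec (f a) fun y IH => do let i ← IH; g (Nat.pair a (Nat.pair y i)))
  | rfind {f} : RecursiveInFn O f →
      RecursiveInFn O fun a => Nat.rfind fun n => (fun m => m = 0) <$> f (Nat.pair a n)

/-- The characteristic function of a set of naturals (as a `ℕ → Bool`). -/
def charFn (A : ℕ → Bool) : ℕ → ℕ := fun n => if A n then 1 else 0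

/-- Turing reducibility: `A ≤_T B` iff the characteristic function of `A` is
computable with oracle `B`. -/
def TuringLE (A B : ℕ → Bool) : Prop :=
  RecursiveInFn (charFn B) (fun n => Part.some (charFn A n))

namespace KP

set_option linter.dupNamespace false

inductive Code : Type
  | oracle : Code
  | zero : Code
  | succ : Code
  | left : Code
  | right : Code
  | pair : Code → Code → Code
  | comp : Code → Code → Code
  | prec : Code → Code → Code
  | rfind : Code → Code

def eval (O : ℕ → ℕ) : Code → ℕ →. ℕ
  | .oracle => fun n => Part.some (O n)
  | .zero => pure 0
  | .succ => Nat.succ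
  | .left => ↑fun n : ℕ => n.unpair.1
  | .right => ↑fun n : ℕ => n.unpair.2
  | .pair cf cg => fun n => Nat.pair <$> eval O cf n <*> eval O cg n
  | .comp cf cg => fun n => eval O cg n >>= eval O cf
  | .prec cf cg => Nat.unpaired fun a n =>
      n.rec (eval O cf a) fun y IH => do let i ← IH; eval O cg (Nat.pair a (Nat.pair y i))
  | .rfind cf => fun a => Nat.rfind fun n => (fun m => m = 0) <$> eval O cf (Nat.pair a n)

theorem exists_code {O : ℕ → ℕ} {f : ℕ →. ℕ} (h : RecursiveInFn O f) :
    ∃ c : Code, eval O c = f := by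
  induction h with
  | oracle => exact ⟨.oracle, rfl⟩
  | zero => exact ⟨.zero, rfl⟩
  | succ => exact ⟨.succ, rfl⟩
  | left => exact ⟨.left, rfl⟩
  | right => exact ⟨.right, rfl⟩
  | pair _ _ ihf ihg =>
    obtain ⟨cf, rfl⟩ := ihf; obtain ⟨cg, rfl⟩ := ihg
    exact ⟨.pair cf cg, rfl⟩
  | comp _ _ ihf ihg =>
    obtain ⟨cf, rfl⟩ := ihf; obtain ⟨cg, rfl⟩ := ihg
    exact ⟨.comp cf cg, rfl⟩
  | prec _ _ ihf ihg =>
    obtain ⟨cf, rfl⟩ := ihf; obtain ⟨cg, rfl⟩ := ihg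
    exact ⟨.prec cf cg, rfl⟩
  | rfind _ ihf =>
    obtain ⟨cf, rfl⟩ := ihf
    exact ⟨.rfind cf, rfl⟩


/-- Use principle: a convergent oracle computation only depends on finitely
much of the oracle. -/
theorem use_lemma : ∀ (c : Code) {O : ℕ → ℕ} {n m : ℕ}, m ∈ eval O c n →
    ∃ u : ℕ, ∀ O' : ℕ → ℕ, (∀ k < u, O' k = O k) → m ∈ eval O' c n := by
  intro c
  induction c with
  | oracle =>
    intro O n m h
    rw [eval, Part.mem_some_iff] at h
    exact ⟨n + 1, fun O' hO' => by rw [eval, Part.mem_some_iff, hO' n n.lt_succ_self, h]⟩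
  | zero => exact fun h => ⟨0, fun O' _ => h⟩
  | succ => exact fun h => ⟨0, fun O' _ => h⟩
  | left => exact fun h => ⟨0, fun O' _ => h⟩
  | right => exact fun h => ⟨0, fun O' _ => h⟩
  | pair cf cg ihf ihg =>
    intro O n m h
    rw [eval] at h
    simp only [Seq.seq, Part.map_eq_map, Part.bind_eq_bind, Part.mem_bind_iff,
      Part.mem_map_iff] at h
    obtain ⟨_, ⟨a, ha, rfl⟩, b, hb, rfl⟩ := h
    obtain ⟨u₁, hu₁⟩ := ihf ha
    obtain ⟨u₂, hu₂⟩ := ihg hb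
    refine ⟨max u₁ u₂, fun O' hO' => ?_⟩
    rw [eval]
    simp only [Seq.seq, Part.map_eq_map, Part.bind_eq_bind, Part.mem_bind_iff,
      Part.mem_map_iff]
    exact ⟨_, ⟨a, hu₁ O' fun k hk => hO' k (lt_of_lt_of_le hk (le_max_left _ _)), rfl⟩,
      b, hu₂ O' fun k hk => hO' k (lt_of_lt_of_le hk (le_max_right _ _)), rfl⟩
  | comp cf cg ihf ihg =>
    intro O n m h
    rw [eval] at h
    replace h := Part.mem_bind_iff.mp h
    obtain ⟨a, ha, hm⟩ := h
    obtain ⟨u₂, hu₂⟩ := ihg ha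
    obtain ⟨u₁, hu₁⟩ := ihf hm
    refine ⟨max u₁ u₂, fun O' hO' => ?_⟩
    rw [eval]
    apply Part.mem_bind_iff.mpr
    exact ⟨a, hu₂ O' fun k hk => hO' k (lt_of_lt_of_le hk (le_max_right _ _)),
      hu₁ O' fun k hk => hO' k (lt_of_lt_of_le hk (le_max_left _ _))⟩
  | prec cf cg ihf ihg =>
    intro O n m h
    rw [eval] at h
    simp only [Nat.unpaired] at h
    -- auxiliary induction on the recursion depth
    suffices H : ∀ (b a m : ℕ),
        m ∈ Nat.rec (motive := fun _ => Part ℕ) (eval O cf a) (fun y IH =>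
              IH >>= fun i => eval O cg (Nat.pair a (Nat.pair y i))) b →
        ∃ u : ℕ, ∀ O' : ℕ → ℕ, (∀ k < u, O' k = O k) →
          m ∈ Nat.rec (motive := fun _ => Part ℕ) (eval O' cf a) (fun y IH =>
              IH >>= fun i => eval O' cg (Nat.pair a (Nat.pair y i))) b by
      obtain ⟨u, hu⟩ := H n.unpair.2 n.unpair.1 m h
      refine ⟨u, fun O' hO' => ?_⟩
      rw [eval]
      simpa only [Nat.unpaired] using hu O' hO'
    intro b
    induction b with
    | zero => exact fun a m h => ihf h
    | succ y ih =>
      intro a m h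
      simp only [Part.bind_eq_bind, Part.mem_bind_iff] at h
      obtain ⟨i, hi, hm⟩ := h
      obtain ⟨u₁, hu₁⟩ := ih a i hi
      obtain ⟨u₂, hu₂⟩ := ihg hm
      refine ⟨max u₁ u₂, fun O' hO' => ?_⟩
      simp only [Part.bind_eq_bind, Part.mem_bind_iff]
      exact ⟨i, hu₁ O' fun k hk => hO' k (lt_of_lt_of_le hk (le_max_left _ _)),
        hu₂ O' fun k hk => hO' k (lt_of_lt_of_le hk (le_max_right _ _))⟩
  | rfind cf ihf =>
    intro O n m h
    rw [eval] at h
    replace h := Nat.mem_rfind.mp h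
    obtain ⟨htrue, hfalse⟩ := h
    simp only [Part.map_eq_map, Part.mem_map_iff] at htrue
    obtain ⟨v, hv, hv0⟩ := htrue
    have hv0' : v = 0 := by simpa using hv0
    subst hv0'
    obtain ⟨u₀, hu₀⟩ := ihf hv
    -- for each k < m pick a use
    have h2 : ∀ k, k < m → ∃ u : ℕ, ∀ O' : ℕ → ℕ, (∀ j < u, O' j = O j) →
        ∃ w ∈ eval O' cf (Nat.pair n k), w ≠ 0 := by
      intro k hk
      have := hfalse hk
      simp only [Part.map_eq_map, Part.mem_map_iff] at this
      obtain ⟨w, hw, hw0⟩ := this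
      have hw0' : w ≠ 0 := by simpa using hw0
      obtain ⟨u, hu⟩ := ihf hw
      exact ⟨u, fun O' hO' => ⟨w, hu O' hO', hw0'⟩⟩
    choose! uf huf using h2
    refine ⟨max u₀ ((Finset.range m).sup uf), fun O' hO' => ?_⟩
    rw [eval]; apply Nat.mem_rfind.mpr
    constructor
    · simp only [Part.map_eq_map, Part.mem_map_iff]
      exact ⟨0, hu₀ O' fun k hk => hO' k (lt_of_lt_of_le hk (le_max_left _ _)), by simp⟩
    · intro k hk
      obtain ⟨w, hw, hw0⟩ := huf k hk O' fun j hj => hO' j (lt_of_lt_of_le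
        (lt_of_lt_of_le hj (Finset.le_sup (Finset.mem_range.2 hk))) (le_max_right _ _))
      simp only [Part.map_eq_map, Part.mem_map_iff]
      exact ⟨w, hw, by simpa using hw0⟩


def encodeCode : Code → ℕ
  | .oracle => 0
  | .zero => 1
  | .succ => 2
  | .left => 3
  | .right => 4
  | .pair cf cg => 2 * (2 * Nat.pair (encodeCode cf) (encodeCode cg)) + 5
  | .comp cf cg => 2 * (2 * Nat.pair (encodeCode cf) (encodeCode cg)) + 1 + 5
  | .prec cf cg => 2 * (2 * Nat.pair (encodeCode cf) (encodeCode cg) + 1) + 5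
  | .rfind cf => 2 * (2 * encodeCode cf + 1) + 1 + 5

def ofNatCode : ℕ → Code
  | 0 => .oracle
  | 1 => .zero
  | 2 => .succ
  | 3 => .left
  | 4 => .right
  | n + 5 =>
    let m := n.div2.div2
    have hm : m < n + 5 := by
      simp only [m, Nat.div2_val]
      exact
        lt_of_le_of_lt (le_trans (Nat.div_le_self _ _) (Nat.div_le_self _ _))
          (Nat.succ_le_succ (Nat.le_add_right _ _))
    have _m1 : m.unpair.1 < n + 5 := lt_of_le_of_lt m.unpair_left_le hm
    have _m2 : m.unpair.2 < n + 5 := lt_of_le_of_lt m.unpair_right_le hm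
    match n.bodd, n.div2.bodd with
    | false, false => .pair (ofNatCode m.unpair.1) (ofNatCode m.unpair.2)
    | true , false => .comp (ofNatCode m.unpair.1) (ofNatCode m.unpair.2)
    | false, true  => .prec (ofNatCode m.unpair.1) (ofNatCode m.unpair.2)
    | true , true  => .rfind (ofNatCode m)
  decreasing_by all_goals assumption

theorem ofNatCode_encodeCode : ∀ c : Code, ofNatCode (encodeCode c) = c := by
  intro c
  induction c <;> simp [encodeCode, ofNatCode, Nat.div2_val, *]

theorem ofNatCode_surjective : Function.Surjective ofNatCode :=
  fun c => ⟨encodeCode c, ofNatCode_encodeCode c⟩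



/-- `g` extends the finite condition `l`. -/
def Extends (g : ℕ → Bool) (l : List Bool) : Prop :=
  ∀ i, i < l.length → g i = l.getD i false

theorem Extends.mono {g : ℕ → Bool} {l₁ l₂ : List Bool} (h : l₁ <+: l₂)
    (hg : Extends g l₂) : Extends g l₁ := by
  intro i hi
  rw [hg i (lt_of_lt_of_le hi h.length_le), List.getD_eq_getElem _ _ hi,
    List.getD_eq_getElem _ _ (lt_of_lt_of_le hi h.length_le), h.getElem hi]

theorem getD_agree {l₁ l₂ : List Bool} (h : l₁ <+: l₂ ∨ l₂ <+: l₁) {i : ℕ}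
    (h₁ : i < l₁.length) (h₂ : i < l₂.length) : l₁.getD i false = l₂.getD i false := by
  rw [List.getD_eq_getElem _ _ h₁, List.getD_eq_getElem _ _ h₂]
  rcases h with h | h
  · exact h.getElem h₁
  · exact (h.getElem h₂).symm

/-- One-step extension spec. -/
def ExtSpec (c : Code) (σ τ σ' τ' : List Bool) : Prop :=
  σ <+: σ' ∧ τ <+: τ' ∧ σ.length < σ'.length ∧ τ.length < τ'.length ∧
  ∀ B : ℕ → Bool, Extends B τ' →
    eval (charFn B) c σ.length ≠ Part.some (if σ'.getD σ.length false then 1 else 0)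

theorem ext_exists (c : Code) (σ τ : List Bool) :
    ∃ p : List Bool × List Bool, ExtSpec c σ τ p.1 p.2 := by
  by_cases h : ∃ (g : ℕ → Bool) (v : ℕ), Extends g τ ∧ v ∈ eval (charFn g) c σ.length
  · obtain ⟨g, v, hg, hv⟩ := h
    obtain ⟨u, hu⟩ := use_lemma c hv
    have hτL : τ.length ≤ max u (τ.length + 1) := le_trans (Nat.le_succ _) (le_max_right _ _)
    have huL : u ≤ max u (τ.length + 1) := le_max_left _ _
    refine ⟨(σ ++ [decide (v = 0)],
      τ ++ List.ofFn (fun i : Fin (max u (τ.length + 1) - τ.length) => g (τ.length + i))),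
      ?_, ?_, ?_, ?_, ?_⟩
    · exact List.prefix_append _ _
    · exact List.prefix_append _ _
    · simp
    · simp only [List.length_append, List.length_ofFn]
      omega
    · dsimp only
      intro B hB heq
      have hlen : (τ ++ List.ofFn
          (fun i : Fin (max u (τ.length + 1) - τ.length) => g (τ.length + i))).length =
          max u (τ.length + 1) := by
        simp only [List.length_append, List.length_ofFn]
        omega
      have hBg : ∀ k, k < u → charFn B k = charFn g k := by
        intro k hk
        have hkL : k < (τ ++ List.ofFn
            (fun i : Fin (max u (τ.length + 1) - τ.length) => g (τ.length + i))).length := by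
          simp only [List.length_append, List.length_ofFn]
          omega
        have hBk := hB k hkL
        rw [List.getD_eq_getElem _ _ hkL, List.getElem_append] at hBk
        unfold charFn
        rw [hBk]
        split
        · next h' =>
          have := hg k h'
          rw [List.getD_eq_getElem _ _ h'] at this
          rw [← this]
        · next h' =>
          rw [List.getElem_ofFn]
          congr 2
          simp only [Fin.val_mk]
          congr 1
          omega
      have hv' : v ∈ eval (charFn B) c σ.length := hu _ hBg
      rw [heq, Part.mem_some_iff] at hv'
      have hgetD : (σ ++ [decide (v = 0)]).getD σ.length false = decide (v = 0) := by
        rw [List.getD_eq_getElem _ _ (by simp), List.getElem_append]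
        simp
      rw [hgetD] at hv'
      rcases eq_or_ne v 0 with hv0 | hv0 <;> simp [hv0] at hv'
  · push_neg at h
    refine ⟨(σ ++ [false], τ ++ [false]), List.prefix_append _ _, List.prefix_append _ _,
      by simp, by simp, ?_⟩
    dsimp only
    intro B hB heq
    have hBτ : Extends B τ := hB.mono (List.prefix_append _ _)
    have : (if (σ ++ [false]).getD σ.length false then 1 else 0) ∈
        eval (charFn B) c σ.length := by
      rw [heq]; exact Part.mem_some _
    exact h B _ hBτ this

/-- The chosen one-step extension. -/
noncomputable def extChoice (c : Code) (σ τ : List Bool) : List Bool × List Bool :=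
  Classical.choose (ext_exists c σ τ)

theorem extChoice_spec (c : Code) (σ τ : List Bool) :
    ExtSpec c σ τ (extChoice c σ τ).1 (extChoice c σ τ).2 :=
  Classical.choose_spec (ext_exists c σ τ)

/-- The finite-extension construction. -/
noncomputable def stage : ℕ → List Bool × List Bool
  | 0 => ([], [])
  | s + 1 =>
    if s.bodd then
      let q := extChoice (ofNatCode s.div2) (stage s).2 (stage s).1
      (q.2, q.1)
    else
      extChoice (ofNatCode s.div2) (stage s).1 (stage s).2

theorem stage_succ (s : ℕ) :
    (stage s).1 <+: (stage (s + 1)).1 ∧ (stage s).2 <+: (stage (s + 1)).2 ∧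
    (stage s).1.length < (stage (s + 1)).1.length ∧
    (stage s).2.length < (stage (s + 1)).2.length := by
  rw [stage]
  cases hb : s.bodd <;> simp only [hb, if_true, if_false, Bool.false_eq_true]
  · obtain ⟨h1, h2, h3, h4, _⟩ := extChoice_spec (ofNatCode s.div2) (stage s).1 (stage s).2
    exact ⟨h1, h2, h3, h4⟩
  · obtain ⟨h1, h2, h3, h4, _⟩ := extChoice_spec (ofNatCode s.div2) (stage s).2 (stage s).1
    exact ⟨h2, h1, h4, h3⟩

theorem stage_prefix {s t : ℕ} (h : s ≤ t) :
    (stage s).1 <+: (stage t).1 ∧ (stage s).2 <+: (stage t).2 := by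
  induction t, h using Nat.le_induction with
  | base => exact ⟨List.prefix_refl _, List.prefix_refl _⟩
  | succ t ht ih => exact ⟨ih.1.trans (stage_succ t).1, ih.2.trans (stage_succ t).2.1⟩

theorem stage_len (s : ℕ) : s ≤ (stage s).1.length ∧ s ≤ (stage s).2.length := by
  induction s with
  | zero => simp
  | succ s ih =>
    obtain ⟨_, _, h3, h4⟩ := stage_succ s
    exact ⟨by omega, by omega⟩

/-- The first generic set. -/
noncomputable def Aset (n : ℕ) : Bool := (stage (n + 1)).1.getD n false

/-- The second generic set. -/
noncomputable def Bset (n : ℕ) : Bool := (stage (n + 1)).2.getD n false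

theorem extends_Aset (s : ℕ) : Extends Aset (stage s).1 := by
  intro i hi
  unfold Aset
  have hi' : i < (stage (i + 1)).1.length := lt_of_lt_of_le (Nat.lt_succ_self i) (stage_len _).1
  refine getD_agree ?_ hi' hi
  rcases le_total (i + 1) s with h | h
  · exact Or.inl (stage_prefix h).1
  · exact Or.inr (stage_prefix h).1

theorem extends_Bset (s : ℕ) : Extends Bset (stage s).2 := by
  intro i hi
  unfold Bset
  have hi' : i < (stage (i + 1)).2.length := lt_of_lt_of_le (Nat.lt_succ_self i) (stage_len _).2
  refine getD_agree ?_ hi' hi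
  rcases le_total (i + 1) s with h | h
  · exact Or.inl (stage_prefix h).2
  · exact Or.inr (stage_prefix h).2

end KP

/-- Kleene–Post: there exist Turing incomparable sets `A, B ⊆ ℕ`. -/
theorem kleene_post :
    ∃ A B : ℕ → Bool, ¬ TuringLE A B ∧ ¬ TuringLE B A := by
  refine ⟨KP.Aset, KP.Bset, ?_, ?_⟩
  · intro hT
    obtain ⟨c, hc⟩ := KP.exists_code hT
    obtain ⟨e, rfl⟩ := KP.ofNatCode_surjective c
    set s := 2 * e with hs
    have hbodd : s.bodd = false := by simp [hs, Nat.bodd_mul]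
    have hdiv2 : s.div2 = e := by simp [hs, Nat.div2_val, Nat.mul_div_cancel_left]
    have hstage : KP.stage (s + 1) =
        KP.extChoice (KP.ofNatCode e) (KP.stage s).1 (KP.stage s).2 := by
      rw [KP.stage, hbodd, hdiv2]
      simp
    obtain ⟨h1, h2, h3, h4, h5⟩ :=
      KP.extChoice_spec (KP.ofNatCode e) (KP.stage s).1 (KP.stage s).2
    rw [← hstage] at h3 h5
    have hB : KP.Extends KP.Bset (KP.stage (s + 1)).2 := KP.extends_Bset (s + 1)
    have hne := h5 KP.Bset hB
    apply hne
    rw [congrFun hc (KP.stage s).1.length]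
    unfold charFn
    rw [(KP.extends_Aset (s + 1)) (KP.stage s).1.length h3]
  · intro hT
    obtain ⟨c, hc⟩ := KP.exists_code hT
    obtain ⟨e, rfl⟩ := KP.ofNatCode_surjective c
    set s := 2 * e + 1 with hs
    have hbodd : s.bodd = true := by simp [hs, Nat.bodd_mul]
    have hdiv2 : s.div2 = e := by
      simp only [hs, Nat.div2_val]
      omega
    have hstage : (KP.stage (s + 1)).1 =
          (KP.extChoice (KP.ofNatCode e) (KP.stage s).2 (KP.stage s).1).2 ∧
        (KP.stage (s + 1)).2 =
          (KP.extChoice (KP.ofNatCode e) (KP.stage s).2 (KP.stage s).1).1 := by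
      rw [KP.stage, hbodd, hdiv2]
      simp
    obtain ⟨h1, h2, h3, h4, h5⟩ :=
      KP.extChoice_spec (KP.ofNatCode e) (KP.stage s).2 (KP.stage s).1
    rw [← hstage.2] at h3
    have hA : KP.Extends KP.Aset (KP.stage (s + 1)).1 := KP.extends_Aset (s + 1)
    rw [hstage.1] at hA
    have hne := h5 KP.Aset hA
    rw [← hstage.2] at hne
    apply hne
    rw [congrFun hc (KP.stage s).2.length]
    unfold charFn
    rw [(KP.extends_Bset (s + 1)) (KP.stage s).2.length h3]
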